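/- For every prime quadratic module M in M_n(R), the set J = {B ∈ M_n(R) : B^T B ∈ supp M} is a two-sided ideal of M_n(R), equal to M_n(p(supp M)), and J ∩ S_n(R) = supp M. -/

import Mathlib

open Matrix

/-- A quadratic module in `M_n(R)`. -/
def IsQM {n : ℕ} {R : Type*} [CommRing R] (M : Set (Matrix (Fin n) (Fin n) R)) : Prop :=
  (∀ A ∈ M, A.IsSymm) ∧ (1 : Matrix (Fin n) (Fin n) R) ∈ M ∧
  (∀ a ∈ M, ∀ b ∈ M, a + b ∈ M) ∧
  ∀ (A : Matrix (Fin n) (Fin n) R), ∀ m ∈ M, Aᵀ * m * A ∈ M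

/-- A prime quadratic module in `M_n(R)`. -/
def IsPrimeQM {n : ℕ} {R : Type*} [CommRing R] (M : Set (Matrix (Fin n) (Fin n) R)) : Prop :=
  IsQM M ∧ -(1 : Matrix (Fin n) (Fin n) R) ∉ M ∧
  ∀ (A : Matrix (Fin n) (Fin n) R) (r : R), A.IsSymm → r ^ 2 • A ∈ M →
    A ∈ M ∨ r • (1 : Matrix (Fin n) (Fin n) R) ∈ M ∩ (-M)

namespace StmtAux
set_option linter.unusedSectionVars false
variable {n : ℕ} [NeZero n] {R : Type*} [CommRing R] {M : Set (Matrix (Fin n) (Fin n) R)}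

abbrev Mat (n : ℕ) (R : Type*) [CommRing R] := Matrix (Fin n) (Fin n) R

lemma M_zero (h : IsQM M) : (0 : Mat n R) ∈ M := by
  have h0 := h.2.2.2 0 1 h.2.1
  simpa using h0

lemma M_sum (h : IsQM M) {ι : Type*} (s : Finset ι) (f : ι → Mat n R)
    (hf : ∀ i ∈ s, f i ∈ M) : ∑ i ∈ s, f i ∈ M :=
  Finset.sum_induction f (· ∈ M) (fun a b ha hb => h.2.2.1 a ha b hb) (M_zero h) hf

lemma S_neg {X : Mat n R} (hX : X ∈ M ∩ (-M)) : -X ∈ M ∩ (-M) :=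
  ⟨Set.mem_neg.mp hX.2, by simpa using hX.1⟩

lemma S_add (h : IsQM M) {X Y : Mat n R} (hX : X ∈ M ∩ (-M)) (hY : Y ∈ M ∩ (-M)) :
    X + Y ∈ M ∩ (-M) := by
  refine ⟨h.2.2.1 _ hX.1 _ hY.1, ?_⟩
  rw [Set.mem_neg, neg_add]
  exact h.2.2.1 _ (Set.mem_neg.mp hX.2) _ (Set.mem_neg.mp hY.2)

lemma S_zero (h : IsQM M) : (0 : Mat n R) ∈ M ∩ (-M) := ⟨M_zero h, by simpa using M_zero h⟩

lemma S_sum (h : IsQM M) {ι : Type*} (s : Finset ι) (f : ι → Mat n R)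
    (hf : ∀ i ∈ s, f i ∈ M ∩ (-M)) : ∑ i ∈ s, f i ∈ M ∩ (-M) :=
  Finset.sum_induction f (· ∈ M ∩ (-M)) (fun a b ha hb => S_add h ha hb) (S_zero h) hf

lemma S_congr (h : IsQM M) {X : Mat n R} (hX : X ∈ M ∩ (-M)) (A : Mat n R) :
    Aᵀ * X * A ∈ M ∩ (-M) := by
  refine ⟨h.2.2.2 A X hX.1, ?_⟩
  rw [Set.mem_neg]
  have := h.2.2.2 A (-X) (Set.mem_neg.mp hX.2)
  simpa [mul_neg, neg_mul] using this

lemma S_bilin (h : IsQM M) {X : Mat n R} (hX : X ∈ M ∩ (-M)) (A B : Mat n R) :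
    Aᵀ * X * B + Bᵀ * X * A ∈ M ∩ (-M) := by
  have key : Aᵀ * X * B + Bᵀ * X * A
      = (A + B)ᵀ * X * (A + B) + (-(Aᵀ * X * A) + -(Bᵀ * X * B)) := by
    simp only [transpose_add, add_mul, mul_add]; abel
  rw [key]
  exact S_add h (S_congr h hX _) (S_add h (S_neg (S_congr h hX A)) (S_neg (S_congr h hX B)))

lemma std_conj (i p : Fin n) (X : Mat n R) :
    (Matrix.single i p (1:R))ᵀ * X * Matrix.single i p 1 = X i i • Matrix.single p p 1 := by
  ext a b
  simp [Matrix.mul_apply, Matrix.single, ite_and, Finset.sum_ite_eq]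
  split_ifs <;> simp_all

lemma sum_std_diag : ∑ p : Fin n, Matrix.single p p (1:R) = 1 := by
  ext a b
  rcases eq_or_ne a b with hab | hab
  · subst hab; simp [Matrix.single, Matrix.one_apply, Matrix.sum_apply, Finset.sum_ite_eq, and_comm]
  · have he : (Finset.filter (fun x : Fin n => x = a ∧ x = b) Finset.univ) = ∅ := by
      ext x; simp only [Finset.mem_filter, Finset.mem_univ, true_and, Finset.notMem_empty, iff_false]
      rintro ⟨h1, h2⟩; exact hab (h1.symm.trans h2)
    simp [Matrix.single, Matrix.one_apply, Matrix.sum_apply, hab, he]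

lemma S_diag_smul (h : IsQM M) {X : Mat n R} (hX : X ∈ M ∩ (-M)) (i : Fin n) :
    (X i i) • (1 : Mat n R) ∈ M ∩ (-M) := by
  have : (X i i) • (1 : Mat n R) = ∑ p : Fin n, (Matrix.single i p (1:R))ᵀ * X * Matrix.single i p 1 := by
    simp only [std_conj, ← Finset.smul_sum, sum_std_diag]
  rw [this]
  exact S_sum h _ _ fun p _ => S_congr h hX _


-- scalar smul conjugation
lemma smul_one_conj (r s : R) (X : Mat n R) :
    (r • (1 : Mat n R)) * X * (s • 1) = (r * s) • X := by
  simp [smul_mul_assoc, mul_smul_comm, smul_smul, mul_comm]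

lemma sq_smul_one_mem (h : IsQM M) (r : R) : (r^2) • (1 : Mat n R) ∈ M := by
  have := h.2.2.2 (r • 1) 1 h.2.1
  simpa [transpose_smul, transpose_one, smul_one_conj, pow_two, smul_smul] using this

lemma two_one_not_supp (h : IsPrimeQM M) : (2:R) • (1 : Mat n R) ∉ M ∩ (-M) := by
  intro hc
  have h2 : -((2:R) • (1 : Mat n R)) ∈ M := Set.mem_neg.mp hc.2
  have key : -((2:R) • (1 : Mat n R)) + 1 = -(1 : Mat n R) := by
    rw [show ((2:R) • (1 : Mat n R)) = 1 + 1 by rw [two_smul]]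
    abel
  exact h.2.1 (key ▸ h.1.2.2.1 _ h2 _ h.1.2.1)

lemma quarter (h : IsPrimeQM M) {Z : Mat n R} (hZ : Z.IsSymm)
    (h4 : (2:R)^2 • Z ∈ M ∩ (-M)) : Z ∈ M ∩ (-M) := by
  have hpos : Z ∈ M := by
    rcases h.2.2 Z 2 hZ h4.1 with hz | hc
    · exact hz
    · exact absurd hc (two_one_not_supp h)
  have hneg : -Z ∈ M := by
    have hzsym : (-Z).IsSymm := by rw [Matrix.IsSymm] at hZ ⊢; simp [hZ]
    have : (2:R)^2 • (-Z) ∈ M := by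
      rw [smul_neg]; exact Set.mem_neg.mp h4.2
    rcases h.2.2 (-Z) 2 hzsym this with hz | hc
    · exact hz
    · exact absurd hc (two_one_not_supp h)
  exact ⟨hpos, Set.mem_neg.mpr hneg⟩


/-- scalar membership predicate -/
def P (M : Set (Mat n R)) (r : R) : Prop := r • (1 : Mat n R) ∈ M ∩ (-M)

lemma P_zero (h : IsQM M) : P M (0:R) := by unfold P; simpa using S_zero h

lemma P_add (h : IsQM M) {a b : R} (ha : P M a) (hb : P M b) : P M (a + b) := by
  unfold P at *; rw [add_smul]; exact S_add h ha hb

lemma P_neg {a : R} (ha : P M a) : P M (-a) := by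
  unfold P at *; rw [neg_smul]; exact S_neg ha

lemma P_half (h : IsPrimeQM M) {a : R} (ha : P M (2 * a)) : P M a := by
  refine quarter h (by simp [Matrix.IsSymm]) ?_
  have : ((2:R)^2) • (a • (1 : Mat n R)) = (2*a) • (1 : Mat n R) + (2*a) • 1 := by
    rw [smul_smul, ← add_smul]; ring_nf
  rw [this]
  exact S_add h.1 ha ha

lemma P_sqrt (h : IsPrimeQM M) {r : R} (hr : P M (r^2)) : P M r := by
  have hsym : (-(1 : Mat n R)).IsSymm := by simp [Matrix.IsSymm]
  have hmem : r^2 • (-(1 : Mat n R)) ∈ M := by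
    rw [smul_neg]; exact Set.mem_neg.mp hr.2
  rcases h.2.2 (-1) r hsym hmem with hc | hg
  · exact absurd hc h.2.1
  · exact hg

lemma P_sq_mul (h : IsQM M) {a : R} (ha : P M a) (r : R) : P M (r^2 * a) := by
  have := S_congr h ha (r • 1)
  unfold P
  have e : (r • (1:Mat n R))ᵀ * (a • 1) * (r • 1) = (r^2 * a) • 1 := by
    rw [transpose_smul, transpose_one, smul_one_conj, smul_smul]; ring_nf
  rwa [e] at this

lemma P_mul (h : IsPrimeQM M) {a : R} (ha : P M a) (r : R) : P M (a * r) := by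
  have h1 : P M ((1+r)^2 * a) := P_sq_mul h.1 ha (1+r)
  have h2 : P M (r^2 * a) := P_sq_mul h.1 ha r
  have h3 : P M (2 * (a * r)) := by
    have e : 2 * (a * r) = (1+r)^2 * a + (-a + -(r^2 * a)) := by ring
    rw [e]
    exact P_add h.1 h1 (P_add h.1 (P_neg ha) (P_neg h2))
  exact P_half h h3

lemma P_entry (h : IsPrimeQM M) {X : Mat n R} (hX : X ∈ M ∩ (-M)) (i j : Fin n) :
    P M (X i j) := by
  have hsym : X.IsSymm := h.1.1 X hX.1
  have hdiag : ∀ k, P M (X k k) := fun k => S_diag_smul h.1 hX k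
  set A : Mat n R := Matrix.single i 0 1 + Matrix.single j 0 1 with hAdef
  have hA := S_congr h.1 hX A
  have hY := S_diag_smul h.1 hA 0
  have hcomp : (Aᵀ * X * A) 0 0 = X i i + X i j + X j i + X j j := by
    rw [hAdef]
    simp [Matrix.mul_apply, Matrix.single, ite_and, Finset.sum_ite_eq, Finset.sum_add_distrib,
      add_mul, mul_add]
    ring
  rw [hcomp] at hY
  have hji : X j i = X i j := by
    conv_lhs => rw [← hsym]
    simp [Matrix.transpose_apply]
  have h2 : P M (2 * X i j) := by
    have e : 2 * X i j = (X i i + X i j + X j i + X j j) + (-(X i i) + -(X j j)) := by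
      rw [hji]; ring
    rw [e]
    exact P_add h.1 hY (P_add h.1 (P_neg (hdiag i)) (P_neg (hdiag j)))
  exact P_half h h2


lemma S_pair (h : IsQM M) {c : R} (hc : P M c) (p q : Fin n) :
    c • (Matrix.single p q (1:R) + Matrix.single q p 1) ∈ M ∩ (-M) := by
  have hb := S_bilin h hc (Matrix.single 0 p (1:R)) (Matrix.single 0 q (1:R))
  have e1 : (Matrix.single (0:Fin n) p (1:R))ᵀ = Matrix.single p 0 1 := by
    ext a b; simp [Matrix.single, and_comm]
  have e2 : (Matrix.single (0:Fin n) q (1:R))ᵀ = Matrix.single q 0 1 := by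
    ext a b; simp [Matrix.single, and_comm]
  have m1 : Matrix.single p (0:Fin n) (1:R) * Matrix.single 0 q 1 = Matrix.single p q 1 := by
    simp
  have m2 : Matrix.single q (0:Fin n) (1:R) * Matrix.single 0 p 1 = Matrix.single q p 1 := by
    simp
  rw [e1, e2] at hb
  have key : Matrix.single p (0:Fin n) (1:R) * (c • 1) * Matrix.single 0 q 1
      + Matrix.single q (0:Fin n) (1:R) * (c • 1) * Matrix.single 0 p 1
      = c • (Matrix.single p q (1:R) + Matrix.single q p 1) := by
    rw [mul_smul_comm, mul_smul_comm, mul_one, mul_one, smul_mul_assoc, smul_mul_assoc,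
      m1, m2, smul_add]
  rwa [key] at hb

lemma S_of_symm_entries (h : IsPrimeQM M) {Z : Mat n R} (hZ : Z.IsSymm)
    (hent : ∀ i j, P M (Z i j)) : Z ∈ M ∩ (-M) := by
  have hsum : ∑ p : Fin n, ∑ q : Fin n,
      Z p q • (Matrix.single p q (1:R) + Matrix.single q p 1) ∈ M ∩ (-M) :=
    S_sum h.1 _ _ fun p _ => S_sum h.1 _ _ fun q _ => S_pair h.1 (hent p q) p q
  have hid : ∑ p : Fin n, ∑ q : Fin n,
      Z p q • (Matrix.single p q (1:R) + Matrix.single q p 1) = Z + Zᵀ := by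
    have h1 : ∑ p : Fin n, ∑ q : Fin n, Z p q • Matrix.single p q (1:R) = Z := by
      conv_rhs => rw [matrix_eq_sum_single Z]
      refine Finset.sum_congr rfl fun p _ => Finset.sum_congr rfl fun q _ => ?_
      rw [smul_single, smul_eq_mul, mul_one]
    have h2 : ∑ p : Fin n, ∑ q : Fin n, Z p q • Matrix.single q p (1:R) = Zᵀ := by
      rw [Finset.sum_comm]
      conv_rhs => rw [matrix_eq_sum_single Zᵀ]
      refine Finset.sum_congr rfl fun q _ => Finset.sum_congr rfl fun p _ => ?_
      rw [smul_single, smul_eq_mul, mul_one, Matrix.transpose_apply]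
    calc ∑ p : Fin n, ∑ q : Fin n, Z p q • (Matrix.single p q (1:R) + Matrix.single q p 1)
        = (∑ p : Fin n, ∑ q : Fin n, Z p q • Matrix.single p q (1:R))
          + ∑ p : Fin n, ∑ q : Fin n, Z p q • Matrix.single q p (1:R) := by
          simp [smul_add, Finset.sum_add_distrib]
      _ = Z + Zᵀ := by rw [h1, h2]
  rw [hid] at hsum
  have hZZ : Z + Zᵀ = Z + Z := by rw [hZ.eq]  -- Zᵀ = Z?
  rw [hZZ] at hsum
  refine quarter h hZ ?_
  have e : ((2:R)^2) • Z = (Z + Z) + (Z + Z) := by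
    rw [show ((2:R)^2) = 2 + 2 by norm_num, add_smul, two_smul]
  rw [e]
  exact S_add h.1 hsum hsum

lemma P_J_entry (h : IsPrimeQM M) {B : Mat n R} (hB : Bᵀ * B ∈ M ∩ (-M)) (i j : Fin n) :
    P M (B i j) := by
  have hc : P M ((Bᵀ * B) j j) := S_diag_smul h.1 hB j
  have hcval : (Bᵀ * B) j j = ∑ k : Fin n, B k j * B k j := by
    simp [Matrix.mul_apply, Matrix.transpose_apply]
  refine P_sqrt h ?_
  constructor
  · rw [show (B i j)^2 • (1 : Mat n R) = ((B i j)^2) • 1 from rfl]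
    exact sq_smul_one_mem h.1 _
  · rw [Set.mem_neg]
    have hsplit : (B i j) * (B i j) + ∑ k ∈ Finset.univ.erase i, B k j * B k j
        = ∑ k : Fin n, B k j * B k j :=
      Finset.add_sum_erase Finset.univ (fun k => B k j * B k j) (Finset.mem_univ i)
    have key : -((B i j)^2 • (1 : Mat n R))
        = (-((Bᵀ * B) j j)) • 1 + ∑ k ∈ Finset.univ.erase i, ((B k j)^2) • (1 : Mat n R) := by
      rw [hcval, ← Finset.sum_smul, ← add_smul, ← neg_smul]
      congr 1
      rw [← hsplit]
      ring_nf
    rw [key]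
    refine h.1.2.2.1 _ ?_ _ (M_sum h.1 _ _ fun k _ => sq_smul_one_mem h.1 (B k j))
    rw [neg_smul]
    exact Set.mem_neg.mp hc.2


lemma P_sum (h : IsQM M) {ι : Type*} (s : Finset ι) (f : ι → R)
    (hf : ∀ i ∈ s, P M (f i)) : P M (∑ i ∈ s, f i) :=
  Finset.sum_induction f (P M) (fun _ _ ha hb => P_add h ha hb) (P_zero h) hf

lemma P_transpose_mul_entry (h : IsPrimeQM M) {B : Mat n R}
    (hB : ∀ i j, P M (B i j)) (i j : Fin n) : P M ((Bᵀ * B) i j) := by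
  have e : (Bᵀ * B) i j = ∑ k : Fin n, B k i * B k j := by
    simp [Matrix.mul_apply, Matrix.transpose_apply]
  rw [e]
  exact P_sum h.1 _ _ fun k _ => P_mul h (hB k i) (B k j)

lemma mem_J_iff (h : IsPrimeQM M) (B : Mat n R) :
    Bᵀ * B ∈ M ∩ (-M) ↔ ∀ i j, P M (B i j) := by
  constructor
  · exact fun hB i j => P_J_entry h hB i j
  · intro hB
    refine S_of_symm_entries h ?_ (P_transpose_mul_entry h hB)
    rw [Matrix.IsSymm, Matrix.transpose_mul, Matrix.transpose_transpose]

end StmtAux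

open StmtAux in
theorem stmt11 {n : ℕ} [NeZero n] {R : Type*} [CommRing R]
    (M : Set (Matrix (Fin n) (Fin n) R)) (hM : IsPrimeQM M) :
    (∃ I : TwoSidedIdeal (Matrix (Fin n) (Fin n) R),
        (I : Set (Matrix (Fin n) (Fin n) R)) = {B | Bᵀ * B ∈ M ∩ (-M)}) ∧
      {B : Matrix (Fin n) (Fin n) R | Bᵀ * B ∈ M ∩ (-M)} =
        {B : Matrix (Fin n) (Fin n) R |
          ∀ i j, B i j ∈ (fun A : Matrix (Fin n) (Fin n) R => A 0 0) '' (M ∩ (-M))} ∧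
      {B : Matrix (Fin n) (Fin n) R | Bᵀ * B ∈ M ∩ (-M)} ∩
        {A : Matrix (Fin n) (Fin n) R | A.IsSymm} = M ∩ (-M) := by
  have hQ := hM.1
  have hImage : (fun A : Matrix (Fin n) (Fin n) R => A 0 0) '' (M ∩ (-M)) = {r | P M r} := by
    ext r
    constructor
    · rintro ⟨X, hX, rfl⟩
      exact P_entry hM hX 0 0
    · intro hr
      exact ⟨r • 1, hr, by simp [Matrix.smul_apply, Matrix.one_apply_eq]⟩
  have Eq2 : {B : Matrix (Fin n) (Fin n) R | Bᵀ * B ∈ M ∩ (-M)}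
      = {B : Matrix (Fin n) (Fin n) R | ∀ i j, P M (B i j)} := by
    ext B; exact mem_J_iff hM B
  refine ⟨?_, ?_, ?_⟩
  · refine ⟨TwoSidedIdeal.mk' {B : Matrix (Fin n) (Fin n) R | ∀ i j, P M (B i j)}
      (fun i j => by rw [Matrix.zero_apply]; exact P_zero hQ)
      (fun {x y} hx hy i j => by rw [Matrix.add_apply]; exact P_add hQ (hx i j) (hy i j))
      (fun {x} hx i j => by rw [Matrix.neg_apply]; exact P_neg (hx i j))
      (fun {x y} hy i j => by
        rw [Matrix.mul_apply]
        exact P_sum hQ _ _ fun k _ => by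
          rw [mul_comm]; exact P_mul hM (hy k j) (x i k))
      (fun {x y} hx i j => by
        rw [Matrix.mul_apply]
        exact P_sum hQ _ _ fun k _ => P_mul hM (hx i k) (y k j)), ?_⟩
    rw [TwoSidedIdeal.coe_mk']
    exact Eq2.symm
  · rw [Eq2]
    ext B
    simp only [Set.mem_setOf_eq, hImage]
  · ext X
    constructor
    · rintro ⟨hJ, hsym⟩
      exact S_of_symm_entries hM hsym fun i j => P_J_entry hM hJ i j
    · intro hX
      exact ⟨(mem_J_iff hM X).mpr fun i j => P_entry hM hX i j, hM.1.1 X hX.1⟩
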